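/- Fix K ≥ 2, α ∈ (0,1), ε > 0 and β ∈ (0, 1/2]. For each n, let pₙ ∈ (0,1) with n·pₙ → ∞, and let μₙ be the Erdős–Rényi random graph measure on n nodes with edge probability pₙ (independent Bernoulli(pₙ) edges). Let 𝒞ₙ be any nonempty finite set of community assignments c : Fin n → Fin K such that every c ∈ 𝒞ₙ has at least β·n² intra-community pairs and at least β·n² inter-community pairs; put Nₙ = |𝒞ₙ| and Cₙ = ((1+ε)/pₙ) · sqrt( 2(log(2Nₙ) − log α) / (β n²) ). Then limsup_{n→∞} μₙ( max_{c ∈ 𝒞ₙ} T(c,A) > Cₙ ) ≤ α; that is, the test that rejects when max_{c ∈ 𝒞ₙ} T(c,A) exceeds Cₙ has asymptotic level at most α under the no-homophily (Erdős–Rényi) null hypothesis. -/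

import Mathlib

set_option maxHeartbeats 2000000


open Finset

/-- The set of unordered pairs of distinct nodes, represented as ordered pairs `(i, j)`
with `i < j`. -/
def allPairs (n : ℕ) : Finset (Fin n × Fin n) :=
  Finset.univ.filter (fun p => p.1 < p.2)

/-- Intra-community pairs of the community assignment `c`. -/
def pairsIn {n K : ℕ} (c : Fin n → Fin K) : Finset (Fin n × Fin n) :=
  Finset.univ.filter (fun p => p.1 < p.2 ∧ c p.1 = c p.2)

/-- Inter-community pairs of the community assignment `c`. -/
def pairsOut {n K : ℕ} (c : Fin n → Fin K) : Finset (Fin n × Fin n) :=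
  Finset.univ.filter (fun p => p.1 < p.2 ∧ c p.1 ≠ c p.2)

/-- Arithmetic mean of `P i j` over a finite set of pairs. -/
noncomputable def meanOver {n : ℕ} (S : Finset (Fin n × Fin n))
    (P : Fin n → Fin n → ℝ) : ℝ :=
  (∑ p ∈ S, P p.1 p.2) / S.card

/-- `p̄(P)`: mean edge probability over all pairs of distinct nodes. -/
noncomputable def pbar {n : ℕ} (P : Fin n → Fin n → ℝ) : ℝ :=
  meanOver (allPairs n) P

/-- `p̄_in(c, P)`: mean edge probability over intra-community pairs. -/
noncomputable def pbarIn {n K : ℕ} (c : Fin n → Fin K) (P : Fin n → Fin n → ℝ) : ℝ :=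
  meanOver (pairsIn c) P

/-- `p̄_out(c, P)`: mean edge probability over inter-community pairs. -/
noncomputable def pbarOut {n K : ℕ} (c : Fin n → Fin K) (P : Fin n → Fin n → ℝ) : ℝ :=
  meanOver (pairsOut c) P

/-- The homophily parameter `γ(c, P)`. -/
noncomputable def gamma {n K : ℕ} (c : Fin n → Fin K) (P : Fin n → Fin n → ℝ) : ℝ :=
  (pbarIn c P - pbarOut c P) / pbar P

/-- An edge-probability matrix: symmetric, zero diagonal, entries in `[0,1]` off the
diagonal. -/
def IsEdgeProbMatrix {n : ℕ} (P : Fin n → Fin n → ℝ) : Prop :=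
  (∀ i j, P i j = P j i) ∧ (∀ i, P i i = 0) ∧
    (∀ i j, i ≠ j → 0 ≤ P i j ∧ P i j ≤ 1)

/-- A community assignment is admissible if some community contains at least two nodes
and at least two communities are nonempty. -/
def Admissible {n K : ℕ} (c : Fin n → Fin K) : Prop :=
  (∃ i j : Fin n, i ≠ j ∧ c i = c j) ∧ (∃ i j : Fin n, c i ≠ c j)

/-- A configuration of edge indicators, one Boolean per unordered pair `{i,j}` (encoded
as ordered pairs with `i < j`). -/
abbrev EdgeConfig (n : ℕ) := {p : Fin n × Fin n // p.1 < p.2} → Bool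

/-- The (symmetric, zero-diagonal) adjacency function of an edge configuration, taking
values `0` or `1` in `ℝ`. -/
def adj {n : ℕ} (f : EdgeConfig n) (i j : Fin n) : ℝ :=
  if h : i < j then (if f ⟨(i, j), h⟩ then 1 else 0)
  else if h' : j < i then (if f ⟨(j, i), h'⟩ then 1 else 0)
  else 0

/-- The product Bernoulli weight of an edge configuration under the edge-probability
matrix `P`: independent edges with `A i j ~ Bernoulli (P i j)` for `i < j`. -/
noncomputable def wt {n : ℕ} (P : Fin n → Fin n → ℝ) (f : EdgeConfig n) : ℝ :=
  ∏ e : {p : Fin n × Fin n // p.1 < p.2},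
    (if f e then P e.1.1 e.1.2 else 1 - P e.1.1 e.1.2)

open Classical in
/-- Probability of an event under the product Bernoulli random graph measure with edge
probabilities `P`. -/
noncomputable def graphProb {n : ℕ} (P : Fin n → Fin n → ℝ)
    (E : EdgeConfig n → Prop) : ℝ :=
  ∑ f ∈ Finset.univ.filter E, wt P f

/-- The test statistic `T(c, A)`, obtained by plugging the empirical means
`p̂_in, p̂_out, p̂` into the homophily formula; since `pbarIn`, `pbarOut` and `pbar`
are plain means, `T(c, A) = γ(c, adj f)` computed on the adjacency function. -/
noncomputable def Tstat {n K : ℕ} (c : Fin n → Fin K) (f : EdgeConfig n) : ℝ :=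
  (pbarIn c (adj f) - pbarOut c (adj f)) / pbar (adj f)

/-- The Erdős–Rényi edge-probability matrix with constant edge probability `p`. -/
def erMatrix (n : ℕ) (p : ℝ) : Fin n → Fin n → ℝ :=
  fun i j => if i = j then 0 else p


namespace ERLevel

/-- Indicator of the edge `e` in the configuration `f`. -/
def XI {n : ℕ} (e : {p : Fin n × Fin n // p.1 < p.2}) (f : EdgeConfig n) : ℝ :=
  if f e then 1 else 0

lemma XI_eq_adj {n : ℕ} (e : {p : Fin n × Fin n // p.1 < p.2}) (f : EdgeConfig n) :
    XI e f = adj f e.1.1 e.1.2 := by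
  rw [adj, dif_pos e.2]
  rfl

lemma sum_subtype_allPairs {n : ℕ} (g : Fin n × Fin n → ℝ) :
    ∑ e : {p : Fin n × Fin n // p.1 < p.2}, g e.1 = ∑ p ∈ allPairs n, g p := by
  rw [allPairs]
  exact (Finset.sum_subtype _ (fun x => by simp) g).symm

lemma sum_prod_edgeConfig {n : ℕ} (h : {p : Fin n × Fin n // p.1 < p.2} → Bool → ℝ) :
    ∑ f : EdgeConfig n, ∏ e, h e (f e) = ∏ e, (h e true + h e false) := by
  classical
  calc ∑ f : EdgeConfig n, ∏ e, h e (f e)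
      = ∑ f ∈ Fintype.piFinset (fun _ : {p : Fin n × Fin n // p.1 < p.2} =>
          (Finset.univ : Finset Bool)), ∏ e, h e (f e) := by
        rw [Fintype.piFinset_univ]
    _ = ∏ e, ∑ b, h e b := (Finset.prod_univ_sum _ _).symm
    _ = ∏ e, (h e true + h e false) := by
        refine Finset.prod_congr rfl fun e _ => ?_
        simp [Fintype.sum_bool]

lemma mgf_eq {n : ℕ} (p : ℝ) (a : {p : Fin n × Fin n // p.1 < p.2} → ℝ) :
    ∑ f : EdgeConfig n, wt (erMatrix n p) f * Real.exp (∑ e, a e * XI e f)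
      = ∏ e, (p * Real.exp (a e) + (1 - p)) := by
  have key : ∀ f : EdgeConfig n, wt (erMatrix n p) f * Real.exp (∑ e, a e * XI e f)
      = ∏ e, (if f e then p * Real.exp (a e) else (1 - p)) := by
    intro f
    rw [wt, Real.exp_sum, ← Finset.prod_mul_distrib]
    refine Finset.prod_congr rfl fun e _ => ?_
    have hne : e.1.1 ≠ e.1.2 := ne_of_lt e.2
    by_cases hfe : f e <;> simp [hfe, XI, erMatrix, hne]
  simp only [key]
  have h2 := sum_prod_edgeConfig (fun (e : {p : Fin n × Fin n // p.1 < p.2}) (b : Bool) =>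
    if b then p * Real.exp (a e) else 1 - p)
  simpa using h2

lemma wt_nonneg {n : ℕ} {p : ℝ} (h0 : 0 ≤ p) (h1 : p ≤ 1) (f : EdgeConfig n) :
    0 ≤ wt (erMatrix n p) f := by
  refine Finset.prod_nonneg fun e _ => ?_
  have hne : e.1.1 ≠ e.1.2 := ne_of_lt e.2
  by_cases hfe : f e <;> simp [hfe, erMatrix, hne] <;> linarith

lemma graphProb_nonneg {n : ℕ} {p : ℝ} (h0 : 0 ≤ p) (h1 : p ≤ 1)
    (E : EdgeConfig n → Prop) : 0 ≤ graphProb (erMatrix n p) E := by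
  rw [graphProb]
  exact Finset.sum_nonneg fun f _ => wt_nonneg h0 h1 f

open Classical in
lemma graphProb_eq_sum_ite {n : ℕ} (P : Fin n → Fin n → ℝ) (E : EdgeConfig n → Prop) :
    graphProb P E = ∑ f : EdgeConfig n, if E f then wt P f else 0 := by
  rw [graphProb, Finset.sum_filter]

lemma graphProb_mono {n : ℕ} {p : ℝ} (h0 : 0 ≤ p) (h1 : p ≤ 1)
    {E F : EdgeConfig n → Prop} (h : ∀ f, E f → F f) :
    graphProb (erMatrix n p) E ≤ graphProb (erMatrix n p) F := by
  classical
  rw [graphProb_eq_sum_ite, graphProb_eq_sum_ite]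
  refine Finset.sum_le_sum fun f _ => ?_
  by_cases hE : E f
  · rw [if_pos hE, if_pos (h f hE)]
  · rw [if_neg hE]
    split_ifs with hF
    · exact wt_nonneg h0 h1 f
    · exact le_refl 0

lemma graphProb_or_le {n : ℕ} {p : ℝ} (h0 : 0 ≤ p) (h1 : p ≤ 1)
    (E F : EdgeConfig n → Prop) :
    graphProb (erMatrix n p) (fun f => E f ∨ F f)
      ≤ graphProb (erMatrix n p) E + graphProb (erMatrix n p) F := by
  classical
  rw [graphProb_eq_sum_ite, graphProb_eq_sum_ite, graphProb_eq_sum_ite,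
    ← Finset.sum_add_distrib]
  refine Finset.sum_le_sum fun f _ => ?_
  have hw := wt_nonneg (n := n) h0 h1 f
  by_cases hE : E f <;> by_cases hF : F f <;> simp [hE, hF] <;> linarith

lemma graphProb_exists_le {n : ℕ} {p : ℝ} (h0 : 0 ≤ p) (h1 : p ≤ 1)
    {γ : Type*} [DecidableEq γ] (s : Finset γ) (Q : γ → EdgeConfig n → Prop) :
    graphProb (erMatrix n p) (fun f => ∃ c ∈ s, Q c f)
      ≤ ∑ c ∈ s, graphProb (erMatrix n p) (Q c) := by
  classical
  induction s using Finset.induction_on with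
  | empty =>
      rw [Finset.sum_empty, graphProb_eq_sum_ite]
      apply le_of_eq
      apply Finset.sum_eq_zero
      intro f _
      rw [if_neg]
      simp
  | @insert a s' hc ih =>
      rw [Finset.sum_insert hc]
      calc graphProb (erMatrix n p) (fun f => ∃ c ∈ insert a s', Q c f)
          ≤ graphProb (erMatrix n p) (fun f => Q a f ∨ ∃ c ∈ s', Q c f) := by
            refine graphProb_mono h0 h1 fun f hf => ?_
            obtain ⟨c, hcs, hq⟩ := hf
            rcases Finset.mem_insert.1 hcs with rfl | hcs
            · exact Or.inl hq
            · exact Or.inr ⟨c, hcs, hq⟩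
        _ ≤ _ := le_trans (graphProb_or_le h0 h1 _ _)
            (add_le_add_right ih _)

lemma bern_mgf_le (q : ℝ) (h0 : 0 ≤ q) (h1 : q ≤ 1) (u : ℝ) :
    q * Real.exp u + (1 - q) ≤ Real.exp (q * u + u ^ 2 / 4) := by
  set D : ℝ → ℝ := fun x => 1 - q + q * Real.exp x with hDdef
  have hD : ∀ x, 0 < D x := by
    intro x
    have hE := Real.exp_pos x
    show 0 < 1 - q + q * Real.exp x
    rcases le_total (Real.exp x) 1 with h | h
    · nlinarith [mul_nonneg (sub_nonneg.2 h1) (sub_nonneg.2 h)]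
    · nlinarith [mul_nonneg h0 (sub_nonneg.2 h)]
  set φ : ℝ → ℝ := fun x => q * Real.exp x / D x with hφdef
  have hφ0 : ∀ x, 0 ≤ φ x := fun x =>
    div_nonneg (mul_nonneg h0 (Real.exp_pos x).le) (hD x).le
  have hφ1 : ∀ x, φ x ≤ 1 := by
    intro x
    rw [hφdef, div_le_one (hD x)]
    simp only [hDdef]; nlinarith [hD x]
  have hDderiv : ∀ x, HasDerivAt D (q * Real.exp x) x := by
    intro x
    exact ((Real.hasDerivAt_exp x).const_mul q).const_add (1 - q)
  have hφderiv : ∀ x, HasDerivAt φ (φ x * (1 - φ x)) x := by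
    intro x
    have hNum : HasDerivAt (fun x => q * Real.exp x) (q * Real.exp x) x :=
      (Real.hasDerivAt_exp x).const_mul q
    have h := hNum.div (hDderiv x) (hD x).ne'
    refine HasDerivAt.congr_deriv (f := φ) h ?_
    have hne := (hD x).ne'
    rw [hφdef]
    field_simp
  have hφbound : ∀ x, ‖φ x * (1 - φ x)‖ ≤ 1 / 4 := by
    intro x
    rw [Real.norm_eq_abs, abs_le]
    constructor <;> nlinarith [hφ0 x, hφ1 x, sq_nonneg (φ x - 1 / 2)]
  have hφ_at0 : φ 0 = q := by simp [hφdef, hDdef]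
  have step1 : ∀ x : ℝ, ‖φ x - q‖ ≤ 1 / 4 * ‖x‖ := by
    intro x
    have := convex_univ.norm_image_sub_le_of_norm_hasDerivWithin_le
      (f := φ) (f' := fun x => φ x * (1 - φ x)) (C := 1 / 4)
      (fun y _ => (hφderiv y).hasDerivWithinAt) (fun y _ => hφbound y)
      (Set.mem_univ 0) (Set.mem_univ x)
    simpa [hφ_at0] using this
  set g : ℝ → ℝ := fun x => Real.log (D x) - q * x with hgdef
  have hgderiv : ∀ x, HasDerivAt g (φ x - q) x := by
    intro x
    have h2 : HasDerivAt (fun y : ℝ => q * y) q x := by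
      simpa using (hasDerivAt_id x).const_mul q
    exact ((hDderiv x).log (hD x).ne').sub h2
  have step2 : ‖g u - g 0‖ ≤ (1 / 4 * ‖u‖) * ‖u - 0‖ := by
    apply (convex_uIcc 0 u).norm_image_sub_le_of_norm_hasDerivWithin_le
      (f := g) (f' := fun x => φ x - q)
      (fun y _ => (hgderiv y).hasDerivWithinAt)
      (fun y hy => ?_) Set.left_mem_uIcc Set.right_mem_uIcc
    refine (step1 y).trans ?_
    have habs : |y| ≤ |u| := by
      rcases le_total 0 u with h | h
      · rw [Set.uIcc_of_le h, Set.mem_Icc] at hy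
        rw [abs_of_nonneg hy.1, abs_of_nonneg h]; exact hy.2
      · rw [Set.uIcc_of_ge h, Set.mem_Icc] at hy
        rw [abs_of_nonpos hy.2, abs_of_nonpos h]; linarith [hy.1]
    rw [Real.norm_eq_abs, Real.norm_eq_abs]
    nlinarith [abs_nonneg y, abs_nonneg u]
  have hg0 : g 0 = 0 := by simp [hgdef, hDdef]
  have key : g u ≤ u ^ 2 / 4 := by
    rw [hg0, sub_zero, sub_zero] at step2
    have h := le_trans (le_abs_self (g u)) step2
    simp only [Real.norm_eq_abs] at h
    nlinarith [abs_mul_abs_self u, abs_nonneg u]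
  have hfin : D u ≤ Real.exp (q * u + u ^ 2 / 4) := by
    calc D u = Real.exp (Real.log (D u)) := (Real.exp_log (hD u)).symm
    _ ≤ Real.exp (q * u + u ^ 2 / 4) := by
        apply Real.exp_le_exp.2
        have : Real.log (D u) - q * u ≤ u ^ 2 / 4 := key
        linarith
  calc q * Real.exp u + (1 - q) = D u := by rw [hDdef]; ring
  _ ≤ _ := hfin

lemma chernoff {n : ℕ} {p : ℝ} (hp0 : 0 ≤ p) (hp1 : p ≤ 1)
    (a : {p : Fin n × Fin n // p.1 < p.2} → ℝ) {t : ℝ} (ht : 0 < t) :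
    graphProb (erMatrix n p)
      (fun f => p * (∑ e, a e) + t ≤ ∑ e, a e * XI e f)
      ≤ Real.exp (-(t ^ 2) / ∑ e, (a e) ^ 2) := by
  classical
  set σ2 : ℝ := ∑ e, (a e) ^ 2 with hσ2
  have hσ2nn : 0 ≤ σ2 := Finset.sum_nonneg fun e _ => sq_nonneg _
  rcases eq_or_lt_of_le hσ2nn with hσ0 | hσpos
  · -- all a e = 0, event is empty
    have ha : ∀ e, a e = 0 := by
      intro e
      have := (Finset.sum_eq_zero_iff_of_nonneg
        (fun e _ => sq_nonneg (a e))).1 hσ0.symm e (Finset.mem_univ e)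
      exact pow_eq_zero_iff (by norm_num) |>.1 this
    rw [graphProb_eq_sum_ite]
    refine le_trans (le_of_eq (Finset.sum_eq_zero fun f _ => ?_)) (Real.exp_pos _).le
    rw [if_neg]
    intro h
    simp only [ha, zero_mul, Finset.sum_const_zero, mul_zero, zero_add] at h
    linarith
  · set L : ℝ := 2 * t / σ2 with hL
    have hLpos : 0 < L := div_pos (by linarith) hσpos
    set S : EdgeConfig n → ℝ := fun f => ∑ e, a e * XI e f with hS
    set m : ℝ := p * (∑ e, a e) with hm
    have markov : graphProb (erMatrix n p) (fun f => m + t ≤ S f)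
        ≤ ∑ f : EdgeConfig n, wt (erMatrix n p) f * Real.exp (L * (S f - (m + t))) := by
      rw [graphProb_eq_sum_ite]
      refine Finset.sum_le_sum fun f _ => ?_
      by_cases hf : m + t ≤ S f
      · rw [if_pos hf]
        refine le_mul_of_one_le_right (wt_nonneg hp0 hp1 f) ?_
        rw [← Real.exp_zero]
        exact Real.exp_le_exp.2 (mul_nonneg hLpos.le (by linarith))
      · rw [if_neg hf]
        exact mul_nonneg (wt_nonneg hp0 hp1 f) (Real.exp_pos _).le
    have hLS : ∀ f, L * S f = ∑ e, L * a e * XI e f := by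
      intro f
      rw [hS, Finset.mul_sum]
      exact Finset.sum_congr rfl fun e _ => by ring
    have factored : ∑ f : EdgeConfig n, wt (erMatrix n p) f * Real.exp (L * (S f - (m + t)))
        = Real.exp (-(L * (m + t))) * ∏ e, (p * Real.exp (L * a e) + (1 - p)) := by
      rw [← mgf_eq p (fun e => L * a e), Finset.mul_sum]
      refine Finset.sum_congr rfl fun f _ => ?_
      rw [mul_comm (Real.exp (-(L * (m + t)))), mul_assoc, ← Real.exp_add]
      congr 1
      rw [mul_sub, hLS f, sub_eq_add_neg]
    have prodle : ∏ e, (p * Real.exp (L * a e) + (1 - p))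
        ≤ Real.exp (∑ e, (p * (L * a e) + (L * a e) ^ 2 / 4)) := by
      rw [Real.exp_sum]
      refine Finset.prod_le_prod (fun e _ => ?_) (fun e _ => bern_mgf_le p hp0 hp1 _)
      have := Real.exp_pos (L * a e)
      nlinarith
    have sumid : -(L * (m + t)) + (∑ e, (p * (L * a e) + (L * a e) ^ 2 / 4))
        = -L * t + L ^ 2 * σ2 / 4 := by
      have e1 : ∑ e, p * (L * a e) = L * m := by
        rw [hm, Finset.mul_sum, Finset.mul_sum]
        exact Finset.sum_congr rfl fun e _ => by ring
      have e2 : ∑ e, (L * a e) ^ 2 / 4 = L ^ 2 * σ2 / 4 := by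
        rw [hσ2, Finset.mul_sum, Finset.sum_div]
        exact Finset.sum_congr rfl fun e _ => by ring
      rw [Finset.sum_add_distrib, e1, e2]
      ring
    have final : -L * t + L ^ 2 * σ2 / 4 = -(t ^ 2) / σ2 := by
      rw [hL]
      field_simp
      ring
    calc graphProb (erMatrix n p) (fun f => m + t ≤ S f)
        ≤ Real.exp (-(L * (m + t))) * ∏ e, (p * Real.exp (L * a e) + (1 - p)) := by
          rw [← factored]; exact markov
      _ ≤ Real.exp (-(L * (m + t))) * Real.exp (∑ e, (p * (L * a e) + (L * a e) ^ 2 / 4)) := by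
          exact mul_le_mul_of_nonneg_left prodle (Real.exp_pos _).le
      _ = Real.exp (-L * t + L ^ 2 * σ2 / 4) := by rw [← Real.exp_add, sumid]
      _ = Real.exp (-(t ^ 2) / σ2) := by rw [final]


lemma pairsIn_eq {n K : ℕ} (c : Fin n → Fin K) :
    pairsIn c = (allPairs n).filter (fun q => c q.1 = c q.2) := by
  rw [pairsIn, allPairs, Finset.filter_filter]

lemma pairsOut_eq {n K : ℕ} (c : Fin n → Fin K) :
    pairsOut c = (allPairs n).filter (fun q => ¬ (c q.1 = c q.2)) := by
  rw [pairsOut, allPairs, Finset.filter_filter]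

lemma card_split {n K : ℕ} (c : Fin n → Fin K) :
    (pairsIn c).card + (pairsOut c).card = (allPairs n).card := by
  rw [pairsIn_eq, pairsOut_eq]
  exact Finset.card_filter_add_card_filter_not _

lemma sum_pairs_split {n K : ℕ} (c : Fin n → Fin K) (g : Fin n × Fin n → ℝ) :
    ∑ e : {q : Fin n × Fin n // q.1 < q.2}, g e.1
      = ∑ q ∈ pairsIn c, g q + ∑ q ∈ pairsOut c, g q := by
  classical
  rw [sum_subtype_allPairs, pairsIn_eq c, pairsOut_eq c,
    Finset.sum_filter_add_sum_filter_not]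

lemma pbar_tail {n : ℕ} {p s : ℝ} (hp0 : 0 ≤ p) (hp1 : p ≤ 1) (hs : 0 < s)
    (hm : 0 < (allPairs n).card) :
    graphProb (erMatrix n p) (fun f => pbar (adj f) ≤ p - s)
      ≤ Real.exp (-(s ^ 2) * ((allPairs n).card : ℝ)) := by
  classical
  set M : ℝ := ((allPairs n).card : ℝ) with hMdef
  have hM : 0 < M := by rw [hMdef]; exact_mod_cast hm
  set a : {q : Fin n × Fin n // q.1 < q.2} → ℝ := fun _ => -(1 / M) with ha
  have hcard : (Fintype.card {q : Fin n × Fin n // q.1 < q.2} : ℝ) = M := by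
    rw [hMdef, Fintype.card_subtype, allPairs]
  have hsuma : ∑ e, a e = -1 := by
    rw [Finset.sum_const, Finset.card_univ, nsmul_eq_mul, hcard]
    field_simp
  have hsumsq : ∑ e, (a e) ^ 2 = 1 / M := by
    have : ∀ e : {q : Fin n × Fin n // q.1 < q.2}, (a e) ^ 2 = (1 / M) ^ 2 := by
      intro e; rw [ha]; ring
    rw [Finset.sum_congr rfl fun e _ => this e, Finset.sum_const, Finset.card_univ,
      nsmul_eq_mul, hcard]
    field_simp
  have hsumX : ∀ f : EdgeConfig n, ∑ e, a e * XI e f = -(pbar (adj f)) := by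
    intro f
    have h1 : ∀ e : {q : Fin n × Fin n // q.1 < q.2},
        a e * XI e f = -(1 / M) * adj f e.1.1 e.1.2 := by
      intro e; rw [XI_eq_adj]
    rw [Finset.sum_congr rfl fun e _ => h1 e]
    have h2 := sum_subtype_allPairs (fun q : Fin n × Fin n => -(1 / M) * adj f q.1 q.2)
    rw [h2, ← Finset.mul_sum, pbar, meanOver, ← hMdef]
    field_simp
  have step := chernoff (n := n) hp0 hp1 a hs
  refine le_trans (le_trans (graphProb_mono hp0 hp1 fun f hf => ?_) step) ?_
  · show p * (∑ e, a e) + s ≤ ∑ e, a e * XI e f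
    rw [hsuma, hsumX f]
    simp only [mul_neg, mul_one]
    linarith
  · rw [hsumsq]
    apply le_of_eq
    congr 1
    rw [div_div_eq_mul_div]
    field_simp

lemma diff_tail {n K : ℕ} {p : ℝ} (hp0 : 0 ≤ p) (hp1 : p ≤ 1) (c : Fin n → Fin K)
    (hIn : 0 < (pairsIn c).card) (hOut : 0 < (pairsOut c).card)
    {t : ℝ} (ht : 0 < t) :
    graphProb (erMatrix n p)
      (fun f => t ≤ pbarIn c (adj f) - pbarOut c (adj f))
      ≤ Real.exp (-(t ^ 2) /
          (1 / ((pairsIn c).card : ℝ) + 1 / ((pairsOut c).card : ℝ))) := by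
  classical
  set mI : ℝ := ((pairsIn c).card : ℝ) with hmI
  set mO : ℝ := ((pairsOut c).card : ℝ) with hmO
  have hmIpos : 0 < mI := by rw [hmI]; exact_mod_cast hIn
  have hmOpos : 0 < mO := by rw [hmO]; exact_mod_cast hOut
  set a : {q : Fin n × Fin n // q.1 < q.2} → ℝ :=
    fun e => if c e.1.1 = c e.1.2 then 1 / mI else -(1 / mO) with ha
  have hIn' : ∀ (F G : Fin n × Fin n → ℝ), ∀ q ∈ pairsIn c,
      (if c q.1 = c q.2 then F q else G q) = F q := by
    intro F G q hq
    rw [pairsIn, Finset.mem_filter] at hq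
    rw [if_pos hq.2.2]
  have hOut' : ∀ (F G : Fin n × Fin n → ℝ), ∀ q ∈ pairsOut c,
      (if c q.1 = c q.2 then F q else G q) = G q := by
    intro F G q hq
    rw [pairsOut, Finset.mem_filter] at hq
    rw [if_neg hq.2.2]
  have key : ∀ (F G : Fin n × Fin n → ℝ),
      ∑ e : {q : Fin n × Fin n // q.1 < q.2},
          (if c e.1.1 = c e.1.2 then F e.1 else G e.1)
        = ∑ q ∈ pairsIn c, F q + ∑ q ∈ pairsOut c, G q := by
    intro F G
    have h0 := sum_pairs_split c (fun q => if c q.1 = c q.2 then F q else G q)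
    rw [h0, Finset.sum_congr rfl (hIn' F G), Finset.sum_congr rfl (hOut' F G)]
  have hsuma : ∑ e, a e = 0 := by
    have h0 := key (fun _ => 1 / mI) (fun _ => -(1 / mO))
    simp only [ha]
    rw [h0, Finset.sum_const, Finset.sum_const, nsmul_eq_mul, nsmul_eq_mul,
      ← hmI, ← hmO]
    field_simp
    ring
  have hsumsq : ∑ e, (a e) ^ 2 = 1 / mI + 1 / mO := by
    have hsq : ∀ e : {q : Fin n × Fin n // q.1 < q.2}, (a e) ^ 2
        = (if c e.1.1 = c e.1.2 then (1 / mI) ^ 2 else (1 / mO) ^ 2) := by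
      intro e
      by_cases h : c e.1.1 = c e.1.2 <;> simp [ha, h] <;> ring
    rw [Finset.sum_congr rfl fun e _ => hsq e,
      key (fun _ => (1 / mI) ^ 2) (fun _ => (1 / mO) ^ 2),
      Finset.sum_const, Finset.sum_const, nsmul_eq_mul, nsmul_eq_mul, ← hmI, ← hmO]
    field_simp
  have hsumX : ∀ f : EdgeConfig n, ∑ e, a e * XI e f
      = pbarIn c (adj f) - pbarOut c (adj f) := by
    intro f
    have h1 : ∀ e : {q : Fin n × Fin n // q.1 < q.2}, a e * XI e f
        = (if c e.1.1 = c e.1.2 then (1 / mI) * adj f e.1.1 e.1.2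
            else -((1 / mO) * adj f e.1.1 e.1.2)) := by
      intro e
      rw [XI_eq_adj]
      by_cases h : c e.1.1 = c e.1.2 <;> simp [ha, h] <;> ring
    rw [Finset.sum_congr rfl fun e _ => h1 e,
      key (fun q => (1 / mI) * adj f q.1 q.2) (fun q => -((1 / mO) * adj f q.1 q.2)),
      Finset.sum_neg_distrib, ← Finset.mul_sum, ← Finset.mul_sum,
      pbarIn, pbarOut, meanOver, meanOver, ← hmI, ← hmO]
    field_simp
    ring
  have step := chernoff (n := n) hp0 hp1 a ht
  refine le_trans (le_trans (graphProb_mono hp0 hp1 fun f hf => ?_) step) ?_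
  · show p * (∑ e, a e) + t ≤ ∑ e, a e * XI e f
    rw [hsuma, hsumX f]
    simp only [mul_zero, zero_add]
    exact hf
  · rw [hsumsq]


end ERLevel

/-- Under the Erdős–Rényi null, the test rejecting when
`max_{c ∈ 𝒞ₙ} T(c,A)` exceeds the threshold
`Cₙ = ((1+ε)/pₙ)·√(2(log(2Nₙ) − log α)/(β n²))` has asymptotic level at most `α`. -/
theorem asymptotic_level_of_test (K : ℕ) (hK : 2 ≤ K)
    (α : ℝ) (hα0 : 0 < α) (hα1 : α < 1)
    (ε : ℝ) (hε : 0 < ε)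
    (β : ℝ) (hβ0 : 0 < β) (hβ1 : β ≤ 1 / 2)
    (p : ℕ → ℝ) (hp : ∀ n, 0 < p n ∧ p n < 1)
    (hnp : Filter.Tendsto (fun n : ℕ => (n : ℝ) * p n) Filter.atTop Filter.atTop)
    (𝒞 : ∀ n : ℕ, Finset (Fin n → Fin K))
    (h𝒞ne : ∀ n, (𝒞 n).Nonempty)
    (h𝒞 : ∀ n, ∀ c ∈ 𝒞 n,
      β * (n : ℝ) ^ 2 ≤ (pairsIn c).card ∧ β * (n : ℝ) ^ 2 ≤ (pairsOut c).card) :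
    Filter.limsup
      (fun n : ℕ => graphProb (erMatrix n (p n))
        (fun f : EdgeConfig n => ∃ c ∈ 𝒞 n,
          ((1 + ε) / p n) *
            Real.sqrt (2 * (Real.log (2 * ((𝒞 n).card : ℝ)) - Real.log α) /
              (β * (n : ℝ) ^ 2)) < Tstat c f))
      Filter.atTop ≤ α := by
  classical
  set aseq : ℕ → ℝ := fun n => graphProb (erMatrix n (p n))
    (fun f : EdgeConfig n => ∃ c ∈ 𝒞 n,
      ((1 + ε) / p n) *
        Real.sqrt (2 * (Real.log (2 * ((𝒞 n).card : ℝ)) - Real.log α) /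
          (β * (n : ℝ) ^ 2)) < Tstat c f) with haseq
  have hε1 : (0:ℝ) < 1 + ε := by linarith
  set bseq : ℕ → ℝ :=
    fun n => Real.exp (-((p n * ε / (1 + ε)) ^ 2) * ((allPairs n).card : ℝ)) with hbseq
  -- the main per-n bound
  have key : ∀ n : ℕ, 0 < n → aseq n ≤ α / 2 + bseq n := by
    intro n hn
    obtain ⟨hp0, hp1⟩ := hp n
    obtain ⟨c₀, hc₀⟩ := h𝒞ne n
    have hβn : 0 < β * (n : ℝ) ^ 2 :=
      mul_pos hβ0 (pow_pos (by exact_mod_cast hn) 2)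
    have hcIn : ∀ c ∈ 𝒞 n, 0 < (pairsIn c).card := by
      intro c hc
      have := (h𝒞 n c hc).1
      have : (0:ℝ) < ((pairsIn c).card : ℝ) := lt_of_lt_of_le hβn this
      exact_mod_cast this
    have hcOut : ∀ c ∈ 𝒞 n, 0 < (pairsOut c).card := by
      intro c hc
      have := (h𝒞 n c hc).2
      have : (0:ℝ) < ((pairsOut c).card : ℝ) := lt_of_lt_of_le hβn this
      exact_mod_cast this
    have hmall : 0 < (allPairs n).card := by
      rw [← ERLevel.card_split c₀]
      have := hcIn c₀ hc₀
      omega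
    set N : ℝ := ((𝒞 n).card : ℝ) with hN
    have hN1 : 1 ≤ N := by
      rw [hN]
      exact_mod_cast Finset.card_pos.2 (h𝒞ne n)
    set Ln : ℝ := Real.log (2 * N) - Real.log α with hLn
    have hLnpos : 0 < Ln := by
      have h1 : Real.log α < 0 := Real.log_neg hα0 hα1
      have h2 : 0 < Real.log (2 * N) := Real.log_pos (by linarith)
      rw [hLn]; linarith
    set tn : ℝ := Real.sqrt (2 * Ln / (β * (n : ℝ) ^ 2)) with htn
    have htnpos : 0 < tn :=
      Real.sqrt_pos.2 (div_pos (by linarith) hβn)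
    have htnsq : tn ^ 2 = 2 * Ln / (β * (n : ℝ) ^ 2) := by
      rw [htn, Real.sq_sqrt (le_of_lt (div_pos (by linarith) hβn))]
    set sn : ℝ := p n * ε / (1 + ε) with hsn
    have hsnpos : 0 < sn := div_pos (mul_pos hp0 hε) hε1
    set Cn : ℝ := ((1 + ε) / p n) * tn with hCn
    have hCn0 : 0 ≤ Cn := mul_nonneg (div_nonneg (by linarith) hp0.le) htnpos.le
    have hps : p n - sn = p n / (1 + ε) := by
      rw [hsn]; field_simp; ring
    have hpspos : 0 < p n - sn := by rw [hps]; positivity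
    have hCps : Cn * (p n - sn) = tn := by
      rw [hCn, hps]
      field_simp
    -- event inclusion
    have hincl : ∀ f : EdgeConfig n,
        (∃ c ∈ 𝒞 n, Cn < Tstat c f) →
        (pbar (adj f) ≤ p n - sn ∨
          ∃ c ∈ 𝒞 n, tn ≤ pbarIn c (adj f) - pbarOut c (adj f)) := by
      intro f hf
      obtain ⟨c, hc, hT⟩ := hf
      by_cases hB : pbar (adj f) ≤ p n - sn
      · exact Or.inl hB
      · push_neg at hB
        refine Or.inr ⟨c, hc, ?_⟩
        have hpb : 0 < pbar (adj f) := lt_trans hpspos hB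
        rw [Tstat, lt_div_iff₀ hpb] at hT
        have h1 : Cn * (p n - sn) ≤ Cn * pbar (adj f) :=
          mul_le_mul_of_nonneg_left hB.le hCn0
        rw [hCps] at h1
        linarith
    -- per-community bound
    have percomm : ∀ c ∈ 𝒞 n,
        graphProb (erMatrix n (p n))
          (fun f => tn ≤ pbarIn c (adj f) - pbarOut c (adj f))
          ≤ Real.exp (-Ln) := by
      intro c hc
      refine le_trans (ERLevel.diff_tail hp0.le hp1.le c (hcIn c hc) (hcOut c hc) htnpos) ?_
      apply Real.exp_le_exp.2
      set mI : ℝ := ((pairsIn c).card : ℝ) with hmI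
      set mO : ℝ := ((pairsOut c).card : ℝ) with hmO
      have hmIpos : 0 < mI := by
        rw [hmI]; exact_mod_cast hcIn c hc
      have hmOpos : 0 < mO := by
        rw [hmO]; exact_mod_cast hcOut c hc
      have hσpos : 0 < 1 / mI + 1 / mO := by positivity
      have hσle : 1 / mI + 1 / mO ≤ 2 / (β * (n : ℝ) ^ 2) := by
        have h1 : 1 / mI ≤ 1 / (β * (n : ℝ) ^ 2) :=
          one_div_le_one_div_of_le hβn (h𝒞 n c hc).1
        have h2 : 1 / mO ≤ 1 / (β * (n : ℝ) ^ 2) :=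
          one_div_le_one_div_of_le hβn (h𝒞 n c hc).2
        have : (2:ℝ) / (β * (n : ℝ) ^ 2) = 1 / (β * (n : ℝ) ^ 2) + 1 / (β * (n : ℝ) ^ 2) := by
          ring
        rw [this]
        linarith
      have hq : Ln ≤ tn ^ 2 / (1 / mI + 1 / mO) := by
        have h1 : tn ^ 2 / (2 / (β * (n : ℝ) ^ 2)) ≤ tn ^ 2 / (1 / mI + 1 / mO) :=
          div_le_div_of_nonneg_left (sq_nonneg tn) hσpos hσle
        have h2 : tn ^ 2 / (2 / (β * (n : ℝ) ^ 2)) = Ln := by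
          rw [htnsq]
          field_simp
        linarith
      have : -(tn ^ 2) / (1 / mI + 1 / mO) = -(tn ^ 2 / (1 / mI + 1 / mO)) := by
        ring
      rw [this]
      linarith
    -- assemble
    have hexpLn : Real.exp (-Ln) = α / (2 * N) := by
      rw [hLn, neg_sub, Real.exp_sub, Real.exp_log hα0, Real.exp_log (by linarith)]
    calc aseq n
        ≤ graphProb (erMatrix n (p n)) (fun f =>
            pbar (adj f) ≤ p n - sn ∨
              ∃ c ∈ 𝒞 n, tn ≤ pbarIn c (adj f) - pbarOut c (adj f)) := by
          rw [haseq]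
          exact ERLevel.graphProb_mono hp0.le hp1.le hincl
      _ ≤ graphProb (erMatrix n (p n)) (fun f => pbar (adj f) ≤ p n - sn)
            + graphProb (erMatrix n (p n)) (fun f =>
                ∃ c ∈ 𝒞 n, tn ≤ pbarIn c (adj f) - pbarOut c (adj f)) :=
          ERLevel.graphProb_or_le hp0.le hp1.le _ _
      _ ≤ bseq n + ∑ c ∈ 𝒞 n, graphProb (erMatrix n (p n))
            (fun f => tn ≤ pbarIn c (adj f) - pbarOut c (adj f)) := by
          refine add_le_add ?_ (ERLevel.graphProb_exists_le hp0.le hp1.le _ _)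
          refine le_trans (ERLevel.pbar_tail hp0.le hp1.le hsnpos hmall) ?_
          rw [hbseq, hsn]
      _ ≤ bseq n + ∑ _c ∈ 𝒞 n, Real.exp (-Ln) :=
          add_le_add_right (Finset.sum_le_sum percomm) _
      _ = bseq n + α / 2 := by
          rw [Finset.sum_const, nsmul_eq_mul, hexpLn, ← hN]
          have hNne : N ≠ 0 := by linarith
          field_simp
      _ = α / 2 + bseq n := by ring
  -- the exponential term tends to zero
  have hbn : ∀ n : ℕ, bseq n ≤
      Real.exp (-(2 * β * (ε / (1 + ε)) ^ 2 * ((n : ℝ) * p n) ^ 2)) := by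
    intro n
    obtain ⟨c₀, hc₀⟩ := h𝒞ne n
    rw [hbseq]
    apply Real.exp_le_exp.2
    rw [neg_mul, neg_le_neg_iff]
    have hM : 2 * (β * (n : ℝ) ^ 2) ≤ ((allPairs n).card : ℝ) := by
      have h1 := (h𝒞 n c₀ hc₀).1
      have h2 := (h𝒞 n c₀ hc₀).2
      have h3 : ((pairsIn c₀).card : ℝ) + ((pairsOut c₀).card : ℝ)
          = ((allPairs n).card : ℝ) := by
        exact_mod_cast congrArg (Nat.cast (R := ℝ)) (ERLevel.card_split c₀)
      linarith
    have hsq : 2 * β * (ε / (1 + ε)) ^ 2 * ((n : ℝ) * p n) ^ 2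
        = (p n * ε / (1 + ε)) ^ 2 * (2 * (β * (n : ℝ) ^ 2)) := by
      field_simp
    rw [hsq]
    exact mul_le_mul_of_nonneg_left hM (by positivity)
  have hrtop : Filter.Tendsto
      (fun n : ℕ => 2 * β * (ε / (1 + ε)) ^ 2 * ((n : ℝ) * p n) ^ 2)
      Filter.atTop Filter.atTop := by
    have hsq : Filter.Tendsto (fun n : ℕ => ((n : ℝ) * p n) ^ 2)
        Filter.atTop Filter.atTop := by
      have := hnp.atTop_mul_atTop₀ hnp
      refine this.congr fun n => ?_
      ring
    exact hsq.const_mul_atTop (by positivity)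
  have hbz : Filter.Tendsto
      (fun n : ℕ => Real.exp (-(2 * β * (ε / (1 + ε)) ^ 2 * ((n : ℝ) * p n) ^ 2)))
      Filter.atTop (nhds 0) :=
    Real.tendsto_exp_atBot.comp (Filter.tendsto_neg_atTop_atBot.comp hrtop)
  have hev : ∀ᶠ n : ℕ in Filter.atTop, aseq n ≤ α := by
    have h1 : ∀ᶠ n : ℕ in Filter.atTop,
        Real.exp (-(2 * β * (ε / (1 + ε)) ^ 2 * ((n : ℝ) * p n) ^ 2)) < α / 2 :=
      hbz.eventually_lt_const (by linarith)
    filter_upwards [h1, Filter.eventually_ge_atTop 1] with n hn1 hn2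
    have := key n hn2
    have := hbn n
    linarith
  refine Filter.limsup_le_of_le ?_ hev
  refine Filter.isCoboundedUnder_le_of_le (l := (Filter.atTop : Filter ℕ))
    (f := aseq) (x := 0) fun n => ?_
  rw [haseq]
  exact ERLevel.graphProb_nonneg (hp n).1.le (hp n).2.le _
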